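/- Fix 0 < f_L < f_H, S_L > S_H > 0, and N₀ > 0. Define the water-filling rate function R̂(λ) = f_L·max(0, log₂((S_L + N₀)/λ)) + (f_H − f_L)·max(0, log₂((S_H + N₀)/λ)) for λ > 0, and the critical rate R_crit = f_L·log₂((S_L + N₀)/(S_H + N₀)). If R > R_crit, then λ* = 2^{−R/f_H}·(S_L + N₀)^{f_L/f_H}·(S_H + N₀)^{(f_H − f_L)/f_H} satisfies 0 < λ* < S_H + N₀ and R̂(λ*) = R. -/

import Mathlib

open Real

/-- **Closed-form water level, high-rate regime.** If `R > R_crit` then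
`λ* = 2^{−R/f_H}(S_L+N₀)^{f_L/f_H}(S_H+N₀)^{(f_H−f_L)/f_H}` satisfies
`0 < λ* < S_H + N₀` and solves the water-filling rate equation `R̂(λ*) = R`. -/
theorem waterfilling_level_high_rate
    (fL fH SL SH N0 : ℝ)
    (hfL : 0 < fL) (hfLH : fL < fH)
    (hSH : 0 < SH) (hSLH : SH < SL) (hN0 : 0 < N0)
    (Rhat : ℝ → ℝ)
    (hRhat : ∀ lam : ℝ, 0 < lam →
      Rhat lam = fL * max 0 (Real.logb 2 ((SL + N0) / lam))
        + (fH - fL) * max 0 (Real.logb 2 ((SH + N0) / lam)))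
    (Rcrit : ℝ) (hRcrit : Rcrit = fL * Real.logb 2 ((SL + N0) / (SH + N0)))
    (R : ℝ) (hR : Rcrit < R)
    (lamStar : ℝ)
    (hlamStar : lamStar = (2 : ℝ) ^ (-(R / fH)) * (SL + N0) ^ (fL / fH)
        * (SH + N0) ^ ((fH - fL) / fH)) :
    0 < lamStar ∧ lamStar < SH + N0 ∧ Rhat lamStar = R := by
  have hfH : 0 < fH := hfL.trans hfLH
  have ha : 0 < SL + N0 := by linarith
  have hb : 0 < SH + N0 := by linarith
  have hlam0 : 0 < lamStar := by
    rw [hlamStar]; positivity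
  have hlog2 : (0:ℝ) < Real.log 2 := Real.log_pos one_lt_two
  have hloglam : Real.log lamStar
      = -(R / fH) * Real.log 2 + (fL / fH) * Real.log (SL + N0)
        + ((fH - fL) / fH) * Real.log (SH + N0) := by
    rw [hlamStar, Real.log_mul (by positivity) (by positivity),
      Real.log_mul (by positivity) (by positivity),
      Real.log_rpow two_pos, Real.log_rpow ha, Real.log_rpow hb]
  have hRc : fL * (Real.log (SL + N0) - Real.log (SH + N0)) < R * Real.log 2 := by
    have h1 : Rcrit * Real.log 2 < R * Real.log 2 :=
      mul_lt_mul_of_pos_right hR hlog2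
    have h2 : Rcrit * Real.log 2 = fL * (Real.log (SL + N0) - Real.log (SH + N0)) := by
      rw [hRcrit, Real.logb, Real.log_div ha.ne' hb.ne']
      field_simp
    linarith
  have hlt : lamStar < SH + N0 := by
    have : Real.log lamStar < Real.log (SH + N0) := by
      have e : Real.log lamStar * fH
          = -(R * Real.log 2) + fL * Real.log (SL + N0) + (fH - fL) * Real.log (SH + N0) := by
        rw [hloglam]; field_simp
      have key : Real.log lamStar * fH < Real.log (SH + N0) * fH := by
        rw [e]; nlinarith [hRc]
      exact lt_of_mul_lt_mul_right key hfH.le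
    exact (Real.log_lt_log_iff hlam0 hb).mp this
  have hltA : lamStar < SL + N0 := by linarith
  refine ⟨hlam0, hlt, ?_⟩
  rw [hRhat lamStar hlam0]
  have hm1 : max 0 (Real.logb 2 ((SL + N0) / lamStar)) = Real.logb 2 ((SL + N0) / lamStar) :=
    max_eq_right (Real.logb_nonneg one_lt_two ((one_le_div hlam0).mpr hltA.le))
  have hm2 : max 0 (Real.logb 2 ((SH + N0) / lamStar)) = Real.logb 2 ((SH + N0) / lamStar) :=
    max_eq_right (Real.logb_nonneg one_lt_two ((one_le_div hlam0).mpr hlt.le))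
  rw [hm1, hm2, Real.logb, Real.logb, Real.log_div ha.ne' hlam0.ne',
    Real.log_div hb.ne' hlam0.ne', hloglam]
  field_simp
  ring
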